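/- Let δ ∈ [0,1), let x_j, x₁,…,x_N ∈ ℝ^D with ‖xᵢ‖₂ = 1 for all i, let c = (c₁,…,c_N) ∈ ℝ^N, and let ξ₁,…,ξ_N be i.i.d. random variables each taking the value 1/(1−δ) with probability 1−δ and the value 0 with probability δ. Then, with λ = δ/(1−δ), E‖x_j − Σᵢ ξᵢ cᵢ xᵢ‖₂² = ‖x_j − Σᵢ cᵢ xᵢ‖₂² + λ‖c‖₂². Consequently, a vector c minimizes c ↦ E‖x_j − Σᵢ ξᵢ cᵢ xᵢ‖₂² over any fixed constraint set S ⊆ ℝ^N if and only if it minimizes c ↦ ‖x_j − Σᵢ cᵢ xᵢ‖₂² + λ‖c‖₂² over S. -/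

import Mathlib

open MeasureTheory Finset

local notation "⟪" x ", " y "⟫" => @inner ℝ _ _ x y

/-- Algebraic expansion of the squared norm of `xj - ∑ tᵢ • xᵢ`. -/
lemma dropout_expand_aux {D N : ℕ} (xj : EuclideanSpace ℝ (Fin D))
    (x : Fin N → EuclideanSpace ℝ (Fin D)) (t : Fin N → ℝ) :
    ‖xj - ∑ i, t i • x i‖ ^ 2
      = ‖xj‖ ^ 2 - 2 * (∑ i, t i * ⟪xj, x i⟫)
        + ∑ i, ∑ j, (t i * t j) * ⟪x i, x j⟫ := by
  rw [norm_sub_sq_real]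
  congr 1
  · congr 1
    rw [inner_sum]
    exact congrArg _ (Finset.sum_congr rfl fun i _ => (real_inner_smul_right _ _ _))
  · rw [← real_inner_self_eq_norm_sq, sum_inner]
    refine Finset.sum_congr rfl fun i _ => ?_
    rw [real_inner_smul_left, inner_sum, Finset.mul_sum]
    refine Finset.sum_congr rfl fun j _ => ?_
    rw [real_inner_smul_right]; ring

/-- With unit-norm dictionary columns, dropout in the self-expressive model is
equivalent to a squared `ℓ₂` regularizer with `λ = δ/(1-δ)`: the expected dropout
objective equals `‖x_j − ∑ i, c i • x i‖² + λ‖c‖²`, and hence minimizing the expected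
dropout objective over any constraint set `S` is equivalent to minimizing the
`ℓ₂`-regularized objective over `S`. -/
theorem dropout_equiv_ridge {Ω : Type*} [MeasurableSpace Ω] (μ : Measure Ω)
    [IsProbabilityMeasure μ] (δ : ℝ) (hδ0 : 0 ≤ δ) (hδ1 : δ < 1) (D N : ℕ)
    (xj : EuclideanSpace ℝ (Fin D))
    (x : Fin N → EuclideanSpace ℝ (Fin D)) (hx : ∀ i, ‖x i‖ = 1)
    (ξ : Fin N → Ω → ℝ) (hm : ∀ i, Measurable (ξ i))
    (hdist : ∀ i, μ {ω | ξ i ω = 1 / (1 - δ)} = ENNReal.ofReal (1 - δ) ∧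
      μ {ω | ξ i ω = 0} = ENNReal.ofReal δ)
    (hind : ProbabilityTheory.iIndepFun ξ μ)
    (lam : ℝ) (hlam : lam = δ / (1 - δ)) :
    (∀ c : EuclideanSpace ℝ (Fin N),
      (∫ ω, ‖xj - ∑ i, (ξ i ω * c i) • x i‖ ^ 2 ∂μ)
        = ‖xj - ∑ i, c i • x i‖ ^ 2 + lam * ‖c‖ ^ 2) ∧
    (∀ (S : Set (EuclideanSpace ℝ (Fin N))) (c : EuclideanSpace ℝ (Fin N)), c ∈ S →
      ((∀ c' ∈ S,
          (∫ ω, ‖xj - ∑ i, (ξ i ω * c i) • x i‖ ^ 2 ∂μ)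
            ≤ (∫ ω, ‖xj - ∑ i, (ξ i ω * c' i) • x i‖ ^ 2 ∂μ)) ↔
       (∀ c' ∈ S,
          ‖xj - ∑ i, c i • x i‖ ^ 2 + lam * ‖c‖ ^ 2
            ≤ ‖xj - ∑ i, c' i • x i‖ ^ 2 + lam * ‖c'‖ ^ 2))) := by
  have h1δ : (0:ℝ) < 1 - δ := by linarith
  set a : ℝ := 1 / (1 - δ) with ha
  have hapos : 0 < a := by positivity
  have hane : a ≠ 0 := ne_of_gt hapos
  have ha1 : a * (1 - δ) = 1 := by rw [ha]; field_simp
  -- the "on" sets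
  set T : Fin N → Set Ω := fun i => {ω | ξ i ω = a} with hT
  have hTmeas : ∀ i, MeasurableSet (T i) := fun i => (hm i) (measurableSet_singleton a)
  have hμT : ∀ i, μ (T i) = ENNReal.ofReal (1 - δ) := fun i => (hdist i).1
  -- complement of good set is null
  have hnull : ∀ i, μ (T i ∪ {ω | ξ i ω = 0})ᶜ = 0 := by
    intro i
    have hdisj : Disjoint (T i) {ω | ξ i ω = 0} := by
      rw [Set.disjoint_left]
      intro ω h1 h2
      exact hane ((show ξ i ω = a from h1).symm.trans h2)
    have hu : μ (T i ∪ {ω | ξ i ω = 0}) = 1 := by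
      rw [measure_union hdisj ((hm i) (measurableSet_singleton 0)), hμT i, (hdist i).2,
        ← ENNReal.ofReal_add (by linarith) hδ0]
      norm_num
    calc μ (T i ∪ {ω | ξ i ω = 0})ᶜ
        = μ Set.univ - μ (T i ∪ {ω | ξ i ω = 0}) :=
          measure_compl ((hTmeas i).union ((hm i) (measurableSet_singleton 0)))
            (measure_ne_top μ _)
      _ = 0 := by rw [hu, measure_univ, tsub_self]
  -- a.e. representation as scaled indicator
  set g : Fin N → Ω → ℝ := fun i ω => a * (T i).indicator (fun _ => (1:ℝ)) ω with hg
  have hae : ∀ i, ξ i =ᵐ[μ] g i := by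
    intro i
    refine measure_mono_null ?_ (hnull i)
    intro ω hω
    simp only [Set.mem_compl_iff, Set.mem_union, Set.mem_setOf_eq]
    rintro (h | h) <;> apply hω
    · show ξ i ω = g i ω
      rw [show ξ i ω = a from h, hg]
      simp [Set.indicator_of_mem (show ω ∈ T i from h)]
    · have h2 : ω ∉ T i := fun hh => hane ((show ξ i ω = a from hh).symm.trans h)
      show ξ i ω = g i ω
      rw [h, hg]
      simp [Set.indicator_of_notMem h2]
  have hgI : ∀ i, Integrable (g i) μ :=
    fun i => ((integrable_const (1:ℝ)).indicator (hTmeas i)).const_mul a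
  have hξI : ∀ i, Integrable (ξ i) μ := fun i => (hgI i).congr (hae i).symm
  have hTto : ∀ i, (μ (T i)).toReal = 1 - δ := by
    intro i; rw [hμT i, ENNReal.toReal_ofReal (le_of_lt h1δ)]
  have hEg : ∀ i, ∫ ω, g i ω ∂μ = 1 := by
    intro i
    simp only [hg]
    rw [integral_const_mul, integral_indicator_const (1:ℝ) (hTmeas i), smul_eq_mul, mul_one,
      measureReal_def, hTto i, ha1]
  have hEξ : ∀ i, ∫ ω, ξ i ω ∂μ = 1 := fun i => (integral_congr_ae (hae i)).trans (hEg i)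
  -- products
  have hprodI : ∀ i j, Integrable (fun ω => ξ i ω * ξ j ω) μ := by
    intro i j
    refine (Integrable.congr ?_ ((hae i).mul (hae j)).symm)
    refine Integrable.mono' (integrable_const (a * a)) ?_ ?_
    · exact (((measurable_const.indicator (hTmeas i)).const_mul a).mul
        ((measurable_const.indicator (hTmeas j)).const_mul a)).aestronglyMeasurable
    · refine Filter.Eventually.of_forall fun ω => ?_
      simp only [hg, Pi.mul_apply, norm_mul, Real.norm_eq_abs]
      have h1 : ∀ (s : Set Ω), |s.indicator (fun _ => (1:ℝ)) ω| ≤ 1 := by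
        intro s; by_cases hω : ω ∈ s <;> simp [hω]
      calc |a| * |(T i).indicator (fun _ => (1:ℝ)) ω| * (|a| * |(T j).indicator (fun _ => (1:ℝ)) ω|)
          ≤ |a| * 1 * (|a| * 1) := by
            gcongr
            exacts [h1 _, h1 _]
        _ = a * a := by rw [abs_of_pos hapos]; ring
  have hEsq : ∀ i, ∫ ω, ξ i ω * ξ i ω ∂μ = a := by
    intro i
    have h1 : (fun ω => ξ i ω * ξ i ω)
        =ᵐ[μ] fun ω => (a * a) * (T i).indicator (fun _ => (1:ℝ)) ω := by
      filter_upwards [hae i] with ω hω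
      rw [hω]
      simp only [hg]
      by_cases h2 : ω ∈ T i <;> simp [h2]
    rw [integral_congr_ae h1, integral_const_mul, integral_indicator_const (1:ℝ) (hTmeas i),
      smul_eq_mul, mul_one, measureReal_def, hTto i, mul_assoc, ha1, mul_one]
  have hEprod : ∀ i j, i ≠ j → ∫ ω, ξ i ω * ξ j ω ∂μ = 1 := by
    intro i j hij
    have h2 := ProbabilityTheory.IndepFun.integral_mul_eq_mul_integral (hind.indepFun hij) (hm i).aestronglyMeasurable
      (hm j).aestronglyMeasurable
    calc ∫ ω, ξ i ω * ξ j ω ∂μ = integral μ (ξ i * ξ j) := rfl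
      _ = 1 := by rw [h2, hEξ i, hEξ j, mul_one]
  have hE : ∀ i j : Fin N, ∫ ω, ξ i ω * ξ j ω ∂μ = if i = j then a else 1 := by
    intro i j
    by_cases hij : i = j
    · subst hij; simp [hEsq i]
    · simp [hij, hEprod i j hij]
  have hnormc : ∀ c : EuclideanSpace ℝ (Fin N), ‖c‖ ^ 2 = ∑ i, c i ^ 2 := by
    intro c
    rw [EuclideanSpace.norm_eq, Real.sq_sqrt (by positivity)]
    exact Finset.sum_congr rfl fun i _ => by rw [Real.norm_eq_abs, sq_abs]
  have lama : lam = a - 1 := by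
    rw [hlam, ha]; field_simp; ring
  -- key identity
  have key : ∀ c : EuclideanSpace ℝ (Fin N),
      (∫ ω, ‖xj - ∑ i, (ξ i ω * c i) • x i‖ ^ 2 ∂μ)
        = ‖xj - ∑ i, c i • x i‖ ^ 2 + lam * ‖c‖ ^ 2 := by
    intro c
    have hpt : ∀ ω, ‖xj - ∑ i, (ξ i ω * c i) • x i‖ ^ 2
        = ‖xj‖ ^ 2 - 2 * (∑ i, (c i * ⟪xj, x i⟫) * ξ i ω)
          + ∑ i, ∑ j, (c i * c j * ⟪x i, x j⟫) * (ξ i ω * ξ j ω) := by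
      intro ω
      rw [dropout_expand_aux xj x (fun i => ξ i ω * c i)]
      congr 1
      · congr 1
        exact congrArg _ (Finset.sum_congr rfl fun i _ => by ring)
      · exact Finset.sum_congr rfl fun i _ =>
          Finset.sum_congr rfl fun j _ => by ring
    have hI1 : Integrable (fun ω => ∑ i, (c i * ⟪xj, x i⟫) * ξ i ω) μ :=
      integrable_finset_sum _ fun i _ => (hξI i).const_mul _
    have hI1' : Integrable (fun ω => 2 * ∑ i, (c i * ⟪xj, x i⟫) * ξ i ω) μ :=
      hI1.const_mul 2
    have hIsub : Integrable
        (fun ω => ‖xj‖ ^ 2 - 2 * (∑ i, (c i * ⟪xj, x i⟫) * ξ i ω)) μ :=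
      (integrable_const _).sub hI1'
    have hI2 : Integrable
        (fun ω => ∑ i, ∑ j, (c i * c j * ⟪x i, x j⟫) * (ξ i ω * ξ j ω)) μ :=
      integrable_finset_sum _ fun i _ =>
        integrable_finset_sum _ fun j _ => (hprodI i j).const_mul _
    calc (∫ ω, ‖xj - ∑ i, (ξ i ω * c i) • x i‖ ^ 2 ∂μ)
        = ∫ ω, (‖xj‖ ^ 2 - 2 * (∑ i, (c i * ⟪xj, x i⟫) * ξ i ω)
          + ∑ i, ∑ j, (c i * c j * ⟪x i, x j⟫) * (ξ i ω * ξ j ω)) ∂μ :=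
          integral_congr_ae (Filter.Eventually.of_forall hpt)
      _ = ‖xj‖ ^ 2 - 2 * (∑ i, c i * ⟪xj, x i⟫)
          + ∑ i, ∑ j, (c i * c j * ⟪x i, x j⟫) * (if i = j then a else 1) := by
          rw [integral_add hIsub hI2,
            integral_sub (integrable_const _) hI1',
            integral_const, integral_const_mul, integral_finset_sum _
              (fun i _ => (hξI i).const_mul _)]
          simp only [probReal_univ, ENNReal.toReal_one, smul_eq_mul, one_mul]
          congr 1
          · congr 2
            refine Finset.sum_congr rfl fun i _ => ?_
            rw [integral_const_mul, hEξ i, mul_one]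
          · rw [integral_finset_sum _ (fun i _ =>
              integrable_finset_sum _ fun j _ => (hprodI i j).const_mul _)]
            refine Finset.sum_congr rfl fun i _ => ?_
            rw [integral_finset_sum _ (fun j _ => (hprodI i j).const_mul _)]
            refine Finset.sum_congr rfl fun j _ => ?_
            rw [integral_const_mul, hE i j]
      _ = ‖xj - ∑ i, c i • x i‖ ^ 2 + lam * ‖c‖ ^ 2 := by
          rw [dropout_expand_aux xj x c, hnormc c, lama]
          have hdiag : ∑ i, ∑ j, (c i * c j * ⟪x i, x j⟫) * (if i = j then a else 1)
              = (∑ i, ∑ j, (c i * c j) * ⟪x i, x j⟫) + (a - 1) * ∑ i, c i ^ 2 := by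
            rw [Finset.mul_sum, ← Finset.sum_add_distrib]
            refine Finset.sum_congr rfl fun i _ => ?_
            have hterm : ∀ j, (c i * c j * ⟪x i, x j⟫) * (if i = j then a else 1)
                = (c i * c j) * ⟪x i, x j⟫
                  + (if j = i then (a - 1) * (c i * c j * ⟪x i, x j⟫) else 0) := by
              intro j
              by_cases hij : i = j
              · subst hij; rw [if_pos rfl, if_pos rfl]; ring
              · simp [hij, Ne.symm hij]
            rw [Finset.sum_congr rfl fun j _ => hterm j, Finset.sum_add_distrib,
              Finset.sum_ite_eq' (Finset.univ) i
                (fun j => (a - 1) * (c i * c j * ⟪x i, x j⟫))]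
            simp only [Finset.mem_univ, if_true]
            have hxi : ⟪x i, x i⟫ = (1:ℝ) := by
              rw [real_inner_self_eq_norm_sq, hx i]; norm_num
            rw [hxi]; ring
          rw [hdiag]; ring
  refine ⟨key, fun S c hc => ⟨fun h c' hc' => ?_, fun h c' hc' => ?_⟩⟩
  · rw [← key c, ← key c']
    exact h c' hc'
  · rw [key c, key c']
    exact h c' hc'
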